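/- arXiv:1501.00624 — 4 statements merged into one kernel-verified Lean document; each statement's English description precedes it below -/
import Mathlib

section
/- For every ε with 0 < ε < 1/3 and every noiseless alternating binary protocol π of length n, there exists a deterministic interactive protocol Π over a binary erasure channel (alphabet {0,1}), with a fixed order of speaking, of length N ≤ c·n/ε for an absolute constant c > 0, such that for every input pair (x,y) and every erasure pattern E with |E| ≤ (1/3 − ε)·N, both parties output the transcript π(x,y). -/
/-- A noiseless alternating binary protocol: Alice sends a bit in each odd round
(i.e., when the number of previously communicated bits is even) and Bob in each even
round, the bit being a fixed function of the sender's input and the past bits. -/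
structure AltProtocol (X Y : Type) where
  nextA : X → List Bool → Bool
  nextB : Y → List Bool → Bool

/-- The transcript of the first `n` rounds of the noiseless protocol on inputs `x, y`. -/
def AltProtocol.transcript {X Y : Type} (pr : AltProtocol X Y) (x : X) (y : Y) :
    ℕ → List Bool
  | 0 => []
  | n+1 =>
    let T := pr.transcript x y n
    T ++ [if T.length % 2 = 0 then pr.nextA x T else pr.nextB y T]

/-- A deterministic interactive protocol of length `N` over an erasure channel with
alphabet `Γ` and a fixed order of speaking: `ord i = true` means Alice is the sender
of round `i`. A view item is `some s` for a symbol the party sent or received intact,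
and `none` for an erased reception. There is no feedback: the sender does not learn
whether its transmission was erased. Each party's next symbol and final output are
functions of its input and its own view. -/
structure ErasureProtocol (Γ X Y O : Type) (N : ℕ) where
  ord : Fin N → Bool
  nextA : X → List (Option Γ) → Γ
  nextB : Y → List (Option Γ) → Γ
  outA : X → List (Option Γ) → O
  outB : Y → List (Option Γ) → O

/-- The pair (Alice's view, Bob's view) after the first `i` rounds of the execution on
inputs `x, y` with erasure pattern `E`: the sender appends its sent symbol to its view;
the receiver appends `none` if the round is erased and the sent symbol otherwise. -/
def ErasureProtocol.views {Γ X Y O : Type} {N : ℕ} (P : ErasureProtocol Γ X Y O N)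
    (x : X) (y : Y) (E : Finset (Fin N)) : ℕ → List (Option Γ) × List (Option Γ)
  | 0 => ([], [])
  | i+1 =>
    let v := P.views x y E i
    if h : i < N then
      if P.ord ⟨i, h⟩ then
        let s := P.nextA x v.1
        (v.1 ++ [some s], v.2 ++ [if (⟨i, h⟩ : Fin N) ∈ E then none else some s])
      else
        let s := P.nextB y v.2
        (v.1 ++ [if (⟨i, h⟩ : Fin N) ∈ E then none else some s], v.2 ++ [some s])
    else v

namespace BE13

def sync (m : ℕ) : Bool := decide (m / 2 % 2 = 1)

theorem sync_ne (m : ℕ) : sync m ≠ sync (m+2) := by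
  simp only [sync, ne_eq, decide_eq_decide]
  omega

def cw (v s : Bool) (t : ℕ) : Bool := if t = 0 then v else if t = 1 then s else xor v s

def decode3 : List (Option Bool) → Option (Bool × Bool)
  | [some a, some b, _] => some (a, b)
  | [some a, none, some c] => some (a, xor a c)
  | [none, some b, some c] => some (xor b c, b)
  | _ => none

def rch (e : ℕ → Bool) (j : ℕ) (w : ℕ → Bool) : List (Option Bool) :=
  [if e (3*j) then none else some (w 0),
   if e (3*j+1) then none else some (w 1),
   if e (3*j+2) then none else some (w 2)]

theorem decode3_rch_sound (e : ℕ → Bool) (j : ℕ) (v s : Bool) :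
    decode3 (rch e j (cw v s)) = none ∨ decode3 (rch e j (cw v s)) = some (v, s) := by
  unfold rch
  cases e (3*j) <;> cases e (3*j+1) <;> cases e (3*j+2) <;>
    simp [decode3, cw] <;> cases v <;> cases s <;> simp

theorem decode3_rch_complete (e : ℕ → Bool) (j : ℕ) (v s : Bool)
    (h : (e (3*j) = false ∧ e (3*j+1) = false) ∨ (e (3*j) = false ∧ e (3*j+2) = false)
       ∨ (e (3*j+1) = false ∧ e (3*j+2) = false)) :
    decode3 (rch e j (cw v s)) = some (v, s) := by
  unfold rch
  cases h0 : e (3*j) <;> cases h1 : e (3*j+1) <;> cases h2 : e (3*j+2) <;>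
    simp_all [decode3, cw] <;> cases v <;> cases s <;> simp

variable {X Y : Type}

def stepA (pr : AltProtocol X Y) (x : X) (TA : List Bool) (r : List (Option Bool)) :
    List Bool :=
  match decode3 r with
  | some (v, s) =>
    if s = sync (TA.length + 1) then
      (TA ++ [v]) ++ [pr.nextA x (TA ++ [v])]
    else TA
  | none => TA

def stepB (pr : AltProtocol X Y) (y : Y) (TB : List Bool) (r : List (Option Bool)) :
    List Bool :=
  match decode3 r with
  | some (v, s) =>
    if s = sync (TB.length + 1) then
      (TB ++ [v]) ++ [pr.nextB y (TB ++ [v])]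
    else TB
  | none => TB

theorem stepA_len (pr : AltProtocol X Y) (x : X) (TA : List Bool) (r : List (Option Bool)) :
    (stepA pr x TA r).length = TA.length ∨ (stepA pr x TA r).length = TA.length + 2 := by
  unfold stepA
  rcases decode3 r with _ | ⟨v, s⟩
  · left; rfl
  · dsimp only
    split
    · right; simp
    · left; rfl

theorem stepB_len (pr : AltProtocol X Y) (y : Y) (TB : List Bool) (r : List (Option Bool)) :
    (stepB pr y TB r).length = TB.length ∨ (stepB pr y TB r).length = TB.length + 2 := by
  unfold stepB
  rcases decode3 r with _ | ⟨v, s⟩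
  · left; rfl
  · dsimp only
    split
    · right; simp
    · left; rfl

theorem transcript_length (pr : AltProtocol X Y) (x : X) (y : Y) (m : ℕ) :
    (pr.transcript x y m).length = m := by
  induction m with
  | zero => rfl
  | succ m ih => simp [AltProtocol.transcript, ih]

theorem transcript_succ (pr : AltProtocol X Y) (x : X) (y : Y) (m : ℕ) :
    pr.transcript x y (m+1) = pr.transcript x y m ++
      [if m % 2 = 0 then pr.nextA x (pr.transcript x y m) else pr.nextB y (pr.transcript x y m)] := by
  simp [AltProtocol.transcript, transcript_length]

theorem transcript_take (pr : AltProtocol X Y) (x : X) (y : Y) {n m : ℕ} (h : n ≤ m) :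
    (pr.transcript x y m).take n = pr.transcript x y n := by
  induction m with
  | zero =>
    have : n = 0 := by omega
    subst this; rfl
  | succ m ih =>
    rcases Nat.lt_or_ge n (m+1) with h' | h'
    · rw [transcript_succ, List.take_append_of_le_length (by rw [transcript_length]; omega),
        ih (by omega)]
    · have hn : n = m + 1 := by omega
      subst hn
      rw [List.take_of_length_le (by rw [transcript_length])]

theorem transcript_getLastD (pr : AltProtocol X Y) (x : X) (y : Y) (m : ℕ) (d : Bool) :
    (pr.transcript x y (m+1)).getLastD d =
      (if m % 2 = 0 then pr.nextA x (pr.transcript x y m) else pr.nextB y (pr.transcript x y m)) := by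
  rw [transcript_succ]
  simp

def run (pr : AltProtocol X Y) (x : X) (y : Y) (e : ℕ → Bool) : ℕ → List Bool × List Bool
  | 0 => ([pr.nextA x []], [])
  | j+1 =>
    let s := run pr x y e j
    if j % 2 = 0 then
      (s.1, stepB pr y s.2 (rch e j (cw (s.1.getLastD false) (sync s.1.length))))
    else
      (stepA pr x s.1 (rch e j (cw (s.2.getLastD false) (sync s.2.length))), s.2)

theorem run_succ_even (pr : AltProtocol X Y) (x : X) (y : Y) (e : ℕ → Bool) (j : ℕ)
    (hj : j % 2 = 0) :
    run pr x y e (j+1) = ((run pr x y e j).1,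
      stepB pr y (run pr x y e j).2
        (rch e j (cw ((run pr x y e j).1.getLastD false) (sync (run pr x y e j).1.length)))) := by
  simp [run, hj]

theorem run_succ_odd (pr : AltProtocol X Y) (x : X) (y : Y) (e : ℕ → Bool) (j : ℕ)
    (hj : j % 2 = 1) :
    run pr x y e (j+1) = (stepA pr x (run pr x y e j).1
        (rch e j (cw ((run pr x y e j).2.getLastD false) (sync (run pr x y e j).2.length))),
      (run pr x y e j).2) := by
  simp [run, hj]

theorem stepA_some (pr : AltProtocol X Y) (x : X) {r : List (Option Bool)} {v s : Bool}
    (hd : decode3 r = some (v, s)) (TA : List Bool) :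
    stepA pr x TA r = if s = sync (TA.length+1) then
      (TA ++ [v]) ++ [pr.nextA x (TA ++ [v])] else TA := by
  simp only [stepA, hd]

theorem stepA_none (pr : AltProtocol X Y) (x : X) {r : List (Option Bool)}
    (hd : decode3 r = none) (TA : List Bool) : stepA pr x TA r = TA := by
  simp only [stepA, hd]

theorem stepB_some (pr : AltProtocol X Y) (y : Y) {r : List (Option Bool)} {v s : Bool}
    (hd : decode3 r = some (v, s)) (TB : List Bool) :
    stepB pr y TB r = if s = sync (TB.length+1) then
      (TB ++ [v]) ++ [pr.nextB y (TB ++ [v])] else TB := by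
  simp only [stepB, hd]

theorem stepB_none (pr : AltProtocol X Y) (y : Y) {r : List (Option Bool)}
    (hd : decode3 r = none) (TB : List Bool) : stepB pr y TB r = TB := by
  simp only [stepB, hd]

theorem stepB_accept (pr : AltProtocol X Y) (x : X) (y : Y) {b : ℕ} (hb : b % 2 = 0)
    {r : List (Option Bool)}
    (hd : decode3 r = some ((pr.transcript x y (b+1)).getLastD false, sync (b+1))) :
    stepB pr y (pr.transcript x y b) r = pr.transcript x y (b+2) := by
  rw [stepB_some pr y hd, transcript_length, if_pos rfl, transcript_getLastD, if_pos hb]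
  have h1 : pr.transcript x y b ++ [pr.nextA x (pr.transcript x y b)] = pr.transcript x y (b+1) := by
    rw [transcript_succ, if_pos hb]
  rw [h1]
  have h2 : pr.transcript x y (b+2) = pr.transcript x y (b+1) ++ [pr.nextB y (pr.transcript x y (b+1))] := by
    rw [show b+2 = (b+1)+1 from rfl, transcript_succ, if_neg (by omega)]
  rw [h2]

theorem stepB_reject (pr : AltProtocol X Y) (y : Y) {a : ℕ} {v : Bool} {r : List (Option Bool)}
    (hd : decode3 r = some (v, sync a)) {TB : List Bool} (hTB : TB.length = a + 1) :
    stepB pr y TB r = TB := by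
  rw [stepB_some pr y hd, hTB, if_neg]
  exact fun h => sync_ne a (by simpa using h)

theorem stepA_accept (pr : AltProtocol X Y) (x : X) (y : Y) {a : ℕ} (ha : a % 2 = 1)
    {r : List (Option Bool)}
    (hd : decode3 r = some ((pr.transcript x y (a+1)).getLastD false, sync (a+1))) :
    stepA pr x (pr.transcript x y a) r = pr.transcript x y (a+2) := by
  rw [stepA_some pr x hd, transcript_length, if_pos rfl, transcript_getLastD, if_neg (by omega)]
  have h1 : pr.transcript x y a ++ [pr.nextB y (pr.transcript x y a)] = pr.transcript x y (a+1) := by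
    rw [transcript_succ, if_neg (by omega)]
  rw [h1]
  have h2 : pr.transcript x y (a+2) = pr.transcript x y (a+1) ++ [pr.nextA x (pr.transcript x y (a+1))] := by
    rw [show a+2 = (a+1)+1 from rfl, transcript_succ, if_pos (by omega)]
  rw [h2]

theorem stepA_reject (pr : AltProtocol X Y) (x : X) {b : ℕ} {v : Bool} {r : List (Option Bool)}
    (hd : decode3 r = some (v, sync b)) {TA : List Bool} (hTA : TA.length = b + 1) :
    stepA pr x TA r = TA := by
  rw [stepA_some pr x hd, hTA, if_neg]
  exact fun h => sync_ne b (by simpa using h)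

theorem run_inv (pr : AltProtocol X Y) (x : X) (y : Y) (e : ℕ → Bool) (j : ℕ) :
    ∃ a b, run pr x y e j = (pr.transcript x y a, pr.transcript x y b) ∧
      a % 2 = 1 ∧ b % 2 = 0 ∧ (b + 1 = a ∨ b = a + 1) := by
  induction j with
  | zero =>
    refine ⟨1, 0, ?_, by omega, by omega, by omega⟩
    simp [run, AltProtocol.transcript]
  | succ j ih =>
    obtain ⟨a, b, hj, ha, hb, hab⟩ := ih
    rcases Nat.mod_two_eq_zero_or_one j with hj2 | hj2
    · rw [run_succ_even pr x y e j hj2, hj]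
      dsimp only
      rw [transcript_length]
      rcases decode3_rch_sound e j ((pr.transcript x y a).getLastD false) (sync a) with hd | hd
      · exact ⟨a, b, by rw [stepB_none pr y hd], ha, hb, hab⟩
      · rcases hab with hba | hba
        · subst hba
          refine ⟨b+1, b+2, ?_, ha, by omega, by omega⟩
          rw [stepB_accept pr x y hb hd]
        · subst hba
          refine ⟨a, a+1, ?_, ha, hb, by omega⟩
          rw [stepB_reject pr y hd (transcript_length pr x y (a+1))]
    · rw [run_succ_odd pr x y e j hj2, hj]
      dsimp only
      rw [transcript_length]
      rcases decode3_rch_sound e j ((pr.transcript x y b).getLastD false) (sync b) with hd | hd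
      · exact ⟨a, b, by rw [stepA_none pr x hd], ha, hb, hab⟩
      · rcases hab with hba | hba
        · subst hba
          refine ⟨b+1, b, ?_, ha, hb, by omega⟩
          rw [stepA_reject pr x hd (transcript_length pr x y (b+1))]
        · subst hba
          refine ⟨a+2, a+1, ?_, by omega, hb, by omega⟩
          rw [stepA_accept pr x y ha hd]

theorem mk_mono (pr : AltProtocol X Y) (x : X) (y : Y) (e : ℕ → Bool) (j : ℕ) :
    min (run pr x y e j).1.length (run pr x y e j).2.length ≤
      min (run pr x y e (j+1)).1.length (run pr x y e (j+1)).2.length := by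
  rcases Nat.mod_two_eq_zero_or_one j with hj | hj
  · rw [run_succ_even pr x y e j hj]
    dsimp only
    rcases stepB_len pr y (run pr x y e j).2
      (rch e j (cw ((run pr x y e j).1.getLastD false) (sync (run pr x y e j).1.length))) with h | h <;> omega
  · rw [run_succ_odd pr x y e j hj]
    dsimp only
    rcases stepA_len pr x (run pr x y e j).1
      (rch e j (cw ((run pr x y e j).2.getLastD false) (sync (run pr x y e j).2.length))) with h | h <;> omega

def pgood (e : ℕ → Bool) (q : ℕ) : Prop :=
  ((Finset.range 6).filter (fun s => e (6*q+s) = true)).card ≤ 1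

instance (e : ℕ → Bool) (q : ℕ) : Decidable (pgood e q) := by unfold pgood; infer_instance

theorem pgood_pair {e : ℕ → Bool} {q : ℕ} (hg : pgood e q) {s t : ℕ}
    (hs : s < 6) (ht : t < 6) (hst : s ≠ t) :
    e (6*q+s) = false ∨ e (6*q+t) = false := by
  by_contra hcon
  push_neg at hcon
  obtain ⟨h1, h2⟩ := hcon
  rw [Bool.ne_false_iff] at h1 h2
  have hsub : ({s, t} : Finset ℕ) ⊆ (Finset.range 6).filter (fun s => e (6*q+s) = true) := by
    intro u hu
    simp only [Finset.mem_insert, Finset.mem_singleton] at hu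
    rcases hu with rfl | rfl <;> simp [Finset.mem_filter, Finset.mem_range, *]
  have h3 := Finset.card_le_card hsub
  rw [Finset.card_insert_of_notMem (by simpa using hst), Finset.card_singleton] at h3
  unfold pgood at hg
  omega

theorem pbad_pair {e : ℕ → Bool} {q : ℕ} (hg : ¬ pgood e q) :
    ∃ s t, s < t ∧ t < 6 ∧ e (6*q+s) = true ∧ e (6*q+t) = true := by
  unfold pgood at hg
  push_neg at hg
  rw [Finset.one_lt_card] at hg
  obtain ⟨u, hu, w, hw, huw⟩ := hg
  simp only [Finset.mem_filter, Finset.mem_range] at hu hw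
  rcases Nat.lt_or_ge u w with h | h
  · exact ⟨u, w, h, hw.1, hu.2, hw.2⟩
  · exact ⟨w, u, by omega, hu.1, hw.2, hu.2⟩
theorem triple_or {P Q R : Prop} (h1 : P ∨ Q) (h2 : P ∨ R) (h3 : Q ∨ R) :
    (P ∧ Q) ∨ (P ∧ R) ∨ (Q ∧ R) := by tauto

theorem pair_progress (pr : AltProtocol X Y) (x : X) (y : Y) (e : ℕ → Bool) (p : ℕ)
    (hg : pgood e p) :
    min (run pr x y e (2*p)).1.length (run pr x y e (2*p)).2.length + 1 ≤
      min (run pr x y e (2*p+2)).1.length (run pr x y e (2*p+2)).2.length := by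
  obtain ⟨a, b, hj, ha, hb, hab⟩ := run_inv pr x y e (2*p)
  have hmo := mk_mono pr x y e (2*p+1)
  rw [show 2*p+1+1 = 2*p+2 from rfl] at hmo
  -- completeness for the first chunk (A-chunk, index 2p, positions 6p..6p+2)
  have hcomp1 : ∀ v s : Bool, decode3 (rch e (2*p) (cw v s)) = some (v, s) := by
    intro v s
    apply decode3_rch_complete
    have g01 := pgood_pair hg (s := 0) (t := 1) (by omega) (by omega) (by omega)
    have g02 := pgood_pair hg (s := 0) (t := 2) (by omega) (by omega) (by omega)
    have g12 := pgood_pair hg (s := 1) (t := 2) (by omega) (by omega) (by omega)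
    rw [show 3*(2*p) = 6*p+0 from by ring]
    rw [show 6*p+0+1 = 6*p+1 from by ring, show 6*p+0+2 = 6*p+2 from by ring]
    exact triple_or g01 g02 g12
  -- completeness for the second chunk (B-chunk, index 2p+1, positions 6p+3..6p+5)
  have hcomp2 : ∀ v s : Bool, decode3 (rch e (2*p+1) (cw v s)) = some (v, s) := by
    intro v s
    apply decode3_rch_complete
    have g01 := pgood_pair hg (s := 3) (t := 4) (by omega) (by omega) (by omega)
    have g02 := pgood_pair hg (s := 3) (t := 5) (by omega) (by omega) (by omega)
    have g12 := pgood_pair hg (s := 4) (t := 5) (by omega) (by omega) (by omega)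
    rw [show 3*(2*p+1) = 6*p+3 from by ring]
    rw [show 6*p+3+1 = 6*p+4 from by ring, show 6*p+3+2 = 6*p+5 from by ring]
    exact triple_or g01 g02 g12
  rcases hab with hba | hba
  · -- b + 1 = a : the A-chunk delivers a new bit to Bob
    subst hba
    have hrun1 : run pr x y e (2*p+1) = (pr.transcript x y (b+1), pr.transcript x y (b+2)) := by
      rw [run_succ_even pr x y e (2*p) (by omega), hj]
      dsimp only
      rw [transcript_length]
      rw [stepB_accept pr x y hb (hcomp1 _ _)]
    have l1 : (run pr x y e (2*p+1)).1.length = b+1 := by rw [hrun1]; exact transcript_length _ _ _ _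
    have l2 : (run pr x y e (2*p+1)).2.length = b+2 := by rw [hrun1]; exact transcript_length _ _ _ _
    have l3 : (run pr x y e (2*p)).1.length = b+1 := by rw [hj]; exact transcript_length _ _ _ _
    have l4 : (run pr x y e (2*p)).2.length = b := by rw [hj]; exact transcript_length _ _ _ _
    omega
  · -- b = a + 1 : the A-chunk is stale; the B-chunk delivers
    subst hba
    have hrun1 : run pr x y e (2*p+1) = (pr.transcript x y a, pr.transcript x y (a+1)) := by
      rw [run_succ_even pr x y e (2*p) (by omega), hj]
      dsimp only
      rw [transcript_length]
      rw [stepB_reject pr y (hcomp1 _ _) (transcript_length pr x y (a+1))]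
    have hrun2 : run pr x y e (2*p+2) = (pr.transcript x y (a+2), pr.transcript x y (a+1)) := by
      rw [show 2*p+2 = (2*p+1)+1 from rfl, run_succ_odd pr x y e (2*p+1) (by omega), hrun1]
      dsimp only
      rw [transcript_length]
      rw [stepA_accept pr x y ha (hcomp2 _ _)]
    have l1 : (run pr x y e (2*p+2)).1.length = a+2 := by rw [hrun2]; exact transcript_length _ _ _ _
    have l2 : (run pr x y e (2*p+2)).2.length = a+1 := by rw [hrun2]; exact transcript_length _ _ _ _
    have l3 : (run pr x y e (2*p)).1.length = a := by rw [hj]; exact transcript_length _ _ _ _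
    have l4 : (run pr x y e (2*p)).2.length = a+1 := by rw [hj]; exact transcript_length _ _ _ _
    omega

theorem run_min (pr : AltProtocol X Y) (x : X) (y : Y) (e : ℕ → Bool) (p : ℕ) :
    ((Finset.range p).filter (fun q => pgood e q)).card ≤
      min (run pr x y e (2*p)).1.length (run pr x y e (2*p)).2.length := by
  induction p with
  | zero => simp
  | succ p ih =>
    have hmono : min (run pr x y e (2*p)).1.length (run pr x y e (2*p)).2.length ≤
        min (run pr x y e (2*(p+1))).1.length (run pr x y e (2*(p+1))).2.length := by
      have m1 := mk_mono pr x y e (2*p)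
      have m2 := mk_mono pr x y e (2*p+1)
      have : 2*(p+1) = 2*p+1+1 := by ring
      rw [this]
      omega
    rw [Finset.range_add_one, Finset.filter_insert]
    by_cases hgp : pgood e p
    · rw [if_pos hgp, Finset.card_insert_of_notMem (by simp)]
      have := pair_progress pr x y e p hgp
      have h2 : 2*(p+1) = 2*p+2 := by ring
      rw [h2]
      omega
    · rw [if_neg hgp]
      omega

def stateA (pr : AltProtocol X Y) (x : X) (view : List (Option Bool)) : ℕ → List Bool
  | 0 => [pr.nextA x []]
  | k+1 => stepA pr x (stateA pr x view k) ((view.drop (6*k+3)).take 3)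

def stateB (pr : AltProtocol X Y) (y : Y) (view : List (Option Bool)) : ℕ → List Bool
  | 0 => []
  | k+1 => stepB pr y (stateB pr y view k) ((view.drop (6*k)).take 3)

def nextA' (pr : AltProtocol X Y) (x : X) (view : List (Option Bool)) : Bool :=
  cw ((stateA pr x view (view.length / 6)).getLastD false)
     (sync (stateA pr x view (view.length / 6)).length) (view.length % 3)

def nextB' (pr : AltProtocol X Y) (y : Y) (view : List (Option Bool)) : Bool :=
  cw ((stateB pr y view (view.length / 6 + 1)).getLastD false)
     (sync (stateB pr y view (view.length / 6 + 1)).length) (view.length % 3)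

def outA' (pr : AltProtocol X Y) (x : X) (n : ℕ) (view : List (Option Bool)) : List Bool :=
  (stateA pr x view (view.length / 6)).take n

def outB' (pr : AltProtocol X Y) (y : Y) (n : ℕ) (view : List (Option Bool)) : List Bool :=
  (stateB pr y view (view.length / 6)).take n

def sent (pr : AltProtocol X Y) (x : X) (y : Y) (e : ℕ → Bool) (m : ℕ) : Bool :=
  if (m/3) % 2 = 0 then
    cw ((run pr x y e (m/3)).1.getLastD false) (sync (run pr x y e (m/3)).1.length) (m % 3)
  else
    cw ((run pr x y e (m/3)).2.getLastD false) (sync (run pr x y e (m/3)).2.length) (m % 3)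

def entA (pr : AltProtocol X Y) (x : X) (y : Y) (e : ℕ → Bool) (m : ℕ) : Option Bool :=
  if (m/3) % 2 = 0 then some (sent pr x y e m)
  else if e m then none else some (sent pr x y e m)

def entB (pr : AltProtocol X Y) (x : X) (y : Y) (e : ℕ → Bool) (m : ℕ) : Option Bool :=
  if (m/3) % 2 = 0 then (if e m then none else some (sent pr x y e m))
  else some (sent pr x y e m)

def VA (pr : AltProtocol X Y) (x : X) (y : Y) (e : ℕ → Bool) (i : ℕ) : List (Option Bool) :=
  (List.range i).map (entA pr x y e)

def VB (pr : AltProtocol X Y) (x : X) (y : Y) (e : ℕ → Bool) (i : ℕ) : List (Option Bool) :=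
  (List.range i).map (entB pr x y e)

theorem VA_length (pr : AltProtocol X Y) (x : X) (y : Y) (e : ℕ → Bool) (i : ℕ) :
    (VA pr x y e i).length = i := by simp [VA]

theorem VB_length (pr : AltProtocol X Y) (x : X) (y : Y) (e : ℕ → Bool) (i : ℕ) :
    (VB pr x y e i).length = i := by simp [VB]

theorem VA_succ (pr : AltProtocol X Y) (x : X) (y : Y) (e : ℕ → Bool) (i : ℕ) :
    VA pr x y e (i+1) = VA pr x y e i ++ [entA pr x y e i] := by
  simp [VA, List.range_succ]

theorem VB_succ (pr : AltProtocol X Y) (x : X) (y : Y) (e : ℕ → Bool) (i : ℕ) :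
    VB pr x y e (i+1) = VB pr x y e i ++ [entB pr x y e i] := by
  simp [VB, List.range_succ]

theorem take3_drop {α : Type*} (l : List α) (o : ℕ) (h : o + 3 ≤ l.length) :
    (l.drop o).take 3 = [l[o]'(by omega), l[o+1]'(by omega), l[o+2]'(by omega)] := by
  rw [List.drop_eq_getElem_cons (by omega : o < l.length)]
  rw [List.drop_eq_getElem_cons (by omega : o+1 < l.length)]
  rw [List.drop_eq_getElem_cons (by omega : o+2 < l.length)]
  rfl

theorem VA_chunk (pr : AltProtocol X Y) (x : X) (y : Y) (e : ℕ → Bool) {i k : ℕ}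
    (h : 6*k+6 ≤ i) :
    ((VA pr x y e i).drop (6*k+3)).take 3 =
      rch e (2*k+1) (cw ((run pr x y e (2*k+1)).2.getLastD false)
        (sync (run pr x y e (2*k+1)).2.length)) := by
  rw [take3_drop _ _ (by rw [VA_length]; omega)]
  have g1 : (VA pr x y e i)[6*k+3]'(by rw [VA_length]; omega) = entA pr x y e (6*k+3) := by
    simp [VA]
  have g2 : (VA pr x y e i)[6*k+3+1]'(by rw [VA_length]; omega) = entA pr x y e (6*k+4) := by
    simp [VA]
  have g3 : (VA pr x y e i)[6*k+3+2]'(by rw [VA_length]; omega) = entA pr x y e (6*k+5) := by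
    simp [VA]
  rw [g1, g2, g3]
  have e1 : (6*k+3)/3 = 2*k+1 := by omega
  have e2 : (6*k+4)/3 = 2*k+1 := by omega
  have e3 : (6*k+5)/3 = 2*k+1 := by omega
  have m1 : (6*k+3)%3 = 0 := by omega
  have m2 : (6*k+4)%3 = 1 := by omega
  have m3 : (6*k+5)%3 = 2 := by omega
  have o1 : ¬((2*k+1)%2 = 0) := by omega
  have p1 : 3*(2*k+1) = 6*k+3 := by ring
  have p2 : 3*(2*k+1)+1 = 6*k+4 := by ring
  have p3 : 3*(2*k+1)+2 = 6*k+5 := by ring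
  simp only [entA, sent, rch, e1, e2, e3, m1, m2, m3, if_neg o1, p1, p2, p3]

theorem VB_chunk (pr : AltProtocol X Y) (x : X) (y : Y) (e : ℕ → Bool) {i k : ℕ}
    (h : 6*k+3 ≤ i) :
    ((VB pr x y e i).drop (6*k)).take 3 =
      rch e (2*k) (cw ((run pr x y e (2*k)).1.getLastD false)
        (sync (run pr x y e (2*k)).1.length)) := by
  rw [take3_drop _ _ (by rw [VB_length]; omega)]
  have g1 : (VB pr x y e i)[6*k]'(by rw [VB_length]; omega) = entB pr x y e (6*k) := by
    simp [VB]
  have g2 : (VB pr x y e i)[6*k+1]'(by rw [VB_length]; omega) = entB pr x y e (6*k+1) := by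
    simp [VB]
  have g3 : (VB pr x y e i)[6*k+2]'(by rw [VB_length]; omega) = entB pr x y e (6*k+2) := by
    simp [VB]
  rw [g1, g2, g3]
  have e1 : (6*k)/3 = 2*k := by omega
  have e2 : (6*k+1)/3 = 2*k := by omega
  have e3 : (6*k+2)/3 = 2*k := by omega
  have m1 : (6*k)%3 = 0 := by omega
  have m2 : (6*k+1)%3 = 1 := by omega
  have m3 : (6*k+2)%3 = 2 := by omega
  have o1 : (2*k)%2 = 0 := by omega
  have p1 : 3*(2*k) = 6*k := by ring
  have p2 : 3*(2*k)+1 = 6*k+1 := by ring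
  have p3 : 3*(2*k)+2 = 6*k+2 := by ring
  simp only [entB, sent, rch, e1, e2, e3, m1, m2, m3, if_pos o1, p1, p2, p3]

theorem stateA_VA (pr : AltProtocol X Y) (x : X) (y : Y) (e : ℕ → Bool) {i : ℕ} (k : ℕ)
    (h : 6*k ≤ i) :
    stateA pr x (VA pr x y e i) k = (run pr x y e (2*k)).1 := by
  induction k with
  | zero => simp [stateA, run]
  | succ k ih =>
    have hk : 6*k+6 ≤ i := by omega
    show stepA pr x (stateA pr x (VA pr x y e i) k) (((VA pr x y e i).drop (6*k+3)).take 3) = _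
    rw [ih (by omega), VA_chunk pr x y e hk]
    rw [show 2*(k+1) = (2*k+1)+1 from by ring, run_succ_odd pr x y e (2*k+1) (by omega)]
    rw [run_succ_even pr x y e (2*k) (by omega)]

theorem stateB_VB (pr : AltProtocol X Y) (x : X) (y : Y) (e : ℕ → Bool) {i : ℕ} (k : ℕ)
    (h : 6*k ≤ i + 3) :
    stateB pr y (VB pr x y e i) k = (run pr x y e (2*k)).2 := by
  induction k with
  | zero => simp [stateB, run]
  | succ k ih =>
    have hk : 6*k+3 ≤ i := by omega
    show stepB pr y (stateB pr y (VB pr x y e i) k) (((VB pr x y e i).drop (6*k)).take 3) = _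
    rw [ih (by omega), VB_chunk pr x y e hk]
    rw [show 2*(k+1) = (2*k+1)+1 from by ring, run_succ_odd pr x y e (2*k+1) (by omega)]
    rw [run_succ_even pr x y e (2*k) (by omega)]

theorem parse_nextA (pr : AltProtocol X Y) (x : X) (y : Y) (e : ℕ → Bool) (i : ℕ)
    (hc : (i/3) % 2 = 0) :
    nextA' pr x (VA pr x y e i) = sent pr x y e i := by
  unfold nextA' sent
  rw [VA_length, stateA_VA pr x y e (i/6) (by omega),
    show 2*(i/6) = i/3 from by omega, if_pos hc]

theorem parse_nextB (pr : AltProtocol X Y) (x : X) (y : Y) (e : ℕ → Bool) (i : ℕ)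
    (hc : (i/3) % 2 = 1) :
    nextB' pr y (VB pr x y e i) = sent pr x y e i := by
  unfold nextB' sent
  rw [VB_length, stateB_VB pr x y e (i/6 + 1) (by omega)]
  rw [show 2*(i/6+1) = (2*(i/6)+1)+1 from by ring, run_succ_odd pr x y e (2*(i/6)+1) (by omega)]
  rw [show 2*(i/6)+1 = i/3 from by omega, if_neg (by omega)]
def eE (N : ℕ) (E : Finset (Fin N)) : ℕ → Bool :=
  fun m => if h : m < N then decide ((⟨m, h⟩ : Fin N) ∈ E) else false

def mkProt (pr : AltProtocol X Y) (n N : ℕ) : ErasureProtocol Bool X Y (List Bool) N where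
  ord := fun i => decide ((i.val / 3) % 2 = 0)
  nextA := fun x v => nextA' pr x v
  nextB := fun y v => nextB' pr y v
  outA := fun x v => outA' pr x n v
  outB := fun y v => outB' pr y n v

theorem views_eq (pr : AltProtocol X Y) (n N : ℕ) (x : X) (y : Y) (E : Finset (Fin N)) :
    ∀ i, i ≤ N → (mkProt pr n N).views x y E i =
      (VA pr x y (eE N E) i, VB pr x y (eE N E) i) := by
  intro i
  induction i with
  | zero => intro _; rfl
  | succ i ih =>
    intro hi
    have h : i < N := hi
    have hee : ∀ hh : i < N, eE N E i = decide ((⟨i, hh⟩ : Fin N) ∈ E) := by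
      intro hh; simp [eE, hh]
    simp only [ErasureProtocol.views]
    rw [ih (by omega), dif_pos h]
    have hord : (mkProt pr n N).ord ⟨i, h⟩ = decide ((i / 3) % 2 = 0) := rfl
    by_cases hc : (i / 3) % 2 = 0
    · rw [hord, if_pos (by simpa using hc)]
      dsimp only
      have hna : (mkProt pr n N).nextA x (VA pr x y (eE N E) i) = sent pr x y (eE N E) i :=
        parse_nextA pr x y (eE N E) i hc
      rw [hna, VA_succ, VB_succ]
      simp only [Prod.mk.injEq]
      refine ⟨?_, ?_⟩
      · congr 1
        simp [entA, hc]
      · congr 1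
        by_cases hm : (⟨i, h⟩ : Fin N) ∈ E <;>
          simp [entB, hc, hm, hee h]
    · rw [hord, if_neg (by simpa using hc)]
      dsimp only
      have hc1 : (i / 3) % 2 = 1 := by omega
      have hnb : (mkProt pr n N).nextB y (VB pr x y (eE N E) i) = sent pr x y (eE N E) i :=
        parse_nextB pr x y (eE N E) i hc1
      rw [hnb, VA_succ, VB_succ]
      simp only [Prod.mk.injEq]
      refine ⟨?_, ?_⟩
      · congr 1
        by_cases hm : (⟨i, h⟩ : Fin N) ∈ E <;>
          simp [entA, hc, hm, hee h]
      · congr 1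
        simp [entB, hc]
theorem main_correct (pr : AltProtocol X Y) (n : ℕ) (ε : ℝ) (hε : 0 < ε) (hε3 : ε < 1/3)
    (Pn : ℕ) (hPn : (n : ℝ) ≤ 3 * ε * Pn) (x : X) (y : Y) (E : Finset (Fin (6*Pn)))
    (hE : (E.card : ℝ) ≤ (1/3 - ε) * (6*Pn)) :
    (mkProt pr n (6*Pn)).outA x ((mkProt pr n (6*Pn)).views x y E (6*Pn)).1 = pr.transcript x y n ∧
    (mkProt pr n (6*Pn)).outB y ((mkProt pr n (6*Pn)).views x y E (6*Pn)).2 = pr.transcript x y n := by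
  set e := eE (6*Pn) E with he
  have hviews := views_eq pr n (6*Pn) x y E (6*Pn) (le_refl _)
  obtain ⟨a, b, hrun, ha, hb, hab⟩ := run_inv pr x y e (2 * Pn)
  have hmin := run_min pr x y e Pn
  set good := (Finset.range Pn).filter (fun q => pgood e q) with hgood
  set bad := (Finset.range Pn).filter (fun q => ¬ pgood e q) with hbad
  have hgb : good.card + bad.card = Pn := by
    rw [hgood, hbad, Finset.card_filter_add_card_filter_not, Finset.card_range]
  have hfib : E.card = ∑ q ∈ Finset.range Pn, (E.filter (fun m => m.val / 6 = q)).card := by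
    apply Finset.card_eq_sum_card_fiberwise
    intro m _
    have := m.isLt
    simp only [Finset.coe_range, Set.mem_Iio, Finset.mem_range]
    omega
  have hbadfib : ∀ q ∈ bad, 2 ≤ (E.filter (fun m => m.val / 6 = q)).card := by
    intro q hq
    rw [hbad, Finset.mem_filter, Finset.mem_range] at hq
    obtain ⟨hqP, hnb⟩ := hq
    obtain ⟨s, t, hst, ht6, hes, het⟩ := pbad_pair hnb
    have hsN : 6*q+s < 6*Pn := by omega
    have htN : 6*q+t < 6*Pn := by omega
    have hmems : (⟨6*q+s, hsN⟩ : Fin (6*Pn)) ∈ E := by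
      rw [he] at hes
      unfold eE at hes
      rw [dif_pos hsN] at hes
      exact of_decide_eq_true hes
    have hmemt : (⟨6*q+t, htN⟩ : Fin (6*Pn)) ∈ E := by
      rw [he] at het
      unfold eE at het
      rw [dif_pos htN] at het
      exact of_decide_eq_true het
    have h1 : 1 < (E.filter (fun m => m.val / 6 = q)).card := by
      rw [Finset.one_lt_card]
      refine ⟨⟨6*q+s, hsN⟩, ?_, ⟨6*q+t, htN⟩, ?_, ?_⟩
      · rw [Finset.mem_filter]
        refine ⟨hmems, ?_⟩
        show (6*q+s)/6 = q
        omega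
      · rw [Finset.mem_filter]
        refine ⟨hmemt, ?_⟩
        show (6*q+t)/6 = q
        omega
      · simp only [ne_eq, Fin.mk.injEq]
        omega
    omega
  have hEbad : 2 * bad.card ≤ E.card := by
    calc 2 * bad.card = ∑ _q ∈ bad, 2 := by rw [Finset.sum_const, smul_eq_mul, mul_comm]
      _ ≤ ∑ q ∈ bad, (E.filter (fun m => m.val / 6 = q)).card := Finset.sum_le_sum hbadfib
      _ ≤ ∑ q ∈ Finset.range Pn, (E.filter (fun m => m.val / 6 = q)).card :=
          Finset.sum_le_sum_of_subset (Finset.filter_subset _ _)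
      _ = E.card := hfib.symm
  have hngood : n ≤ good.card := by
    have hbadR : (bad.card : ℝ) ≤ (1 - 3*ε) * Pn := by
      have hc2 : ((2 * bad.card : ℕ) : ℝ) ≤ (E.card : ℝ) := by exact_mod_cast hEbad
      push_cast at hc2 hE ⊢
      linarith
    have hsum : (n : ℝ) + (bad.card : ℝ) ≤ (Pn : ℝ) := by linarith
    have hnat : n + bad.card ≤ Pn := by exact_mod_cast hsum
    omega
  have l1 : (run pr x y e (2*Pn)).1.length = a := by rw [hrun]; exact transcript_length _ _ _ _
  have l2 : (run pr x y e (2*Pn)).2.length = b := by rw [hrun]; exact transcript_length _ _ _ _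
  rw [l1, l2] at hmin
  have hna : n ≤ a := by omega
  have hnb2 : n ≤ b := by omega
  constructor
  · rw [hviews]
    show outA' pr x n (VA pr x y e (6*Pn)) = pr.transcript x y n
    unfold outA'
    rw [VA_length, show 6*Pn/6 = Pn from by omega, stateA_VA pr x y e Pn (by omega), hrun]
    exact transcript_take pr x y hna
  · rw [hviews]
    show outB' pr y n (VB pr x y e (6*Pn)) = pr.transcript x y n
    unfold outB'
    rw [VB_length, show 6*Pn/6 = Pn from by omega, stateB_VB pr x y e Pn (by omega), hrun]
    exact transcript_take pr x y hnb2

end BE13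

/-- For every ε with 0 < ε < 1/3 and every noiseless alternating binary
protocol π of length n, there is a deterministic protocol over a binary erasure channel
with a fixed order of speaking, of length N ≤ c·n/ε for an absolute constant c > 0,
such that for every input pair (x,y) and every erasure pattern E with
|E| ≤ (1/3 − ε)·N, both parties output the transcript π(x,y). -/
theorem binary_erasure_one_third :
    ∃ c : ℝ, 0 < c ∧
      ∀ (X Y : Type) (pr : AltProtocol X Y) (n : ℕ) (ε : ℝ),
        0 < ε → ε < 1/3 →
        ∃ (N : ℕ) (P : ErasureProtocol Bool X Y (List Bool) N),
          (N : ℝ) ≤ c * n / ε ∧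
          ∀ (x : X) (y : Y) (E : Finset (Fin N)),
            (E.card : ℝ) ≤ (1/3 - ε) * N →
            P.outA x (P.views x y E N).1 = pr.transcript x y n ∧
            P.outB y (P.views x y E N).2 = pr.transcript x y n := by
  refine ⟨4, by norm_num, ?_⟩
  intro X Y pr n ε hε hε3
  set Pn : ℕ := ⌈(n : ℝ) / (3 * ε)⌉₊ with hPn
  have h3e : (0:ℝ) < 3 * ε := by linarith
  refine ⟨6 * Pn, BE13.mkProt pr n (6 * Pn), ?_, ?_⟩
  · -- length bound
    rcases Nat.eq_zero_or_pos n with rfl | hn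
    · have hP0 : Pn = 0 := by
        rw [hPn]
        simp
      rw [hP0]
      norm_num
    · have hceil : (Pn : ℝ) < (n : ℝ)/(3*ε) + 1 := by
        rw [hPn]
        exact Nat.ceil_lt_add_one (by positivity)
      have hn1 : (1:ℝ) ≤ (n:ℝ) := by exact_mod_cast hn
      push_cast
      rw [le_div_iff₀ hε]
      have h1 : (Pn:ℝ)*(3*ε) < ((n:ℝ)/(3*ε) + 1)*(3*ε) := mul_lt_mul_of_pos_right hceil h3e
      rw [add_mul, div_mul_cancel₀ _ (ne_of_gt h3e), one_mul] at h1
      nlinarith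
  · intro x y E hE
    exact BE13.main_correct pr n ε hε hε3 Pn
      (by
        have := Nat.le_ceil ((n:ℝ) / (3*ε))
        rw [div_le_iff₀ h3e] at this
        rw [← hPn] at this
        linarith)
      x y E (by push_cast at hE ⊢; convert hE using 2 <;> push_cast <;> ring)
end

section
/- Let T ∈ ℕ be a multiple of 3 and let x₀, x₁, x₂ : Fin T → Bool be three binary strings of length T. Define w : Fin T → Bool by letting w(i) be the majority value of x₀(i), x₁(i), x₂(i). Then there exist j ∈ {0,1,2} and R with 2T/3 ≤ R ≤ T such that the Hamming distance between the length-R prefixes of w and of x_j equals R − 2T/3. -/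
/-- The majority of three Boolean values: the value attained by at least two of them. -/
def majority3 (a b c : Bool) : Bool := (a && b) || (a && c) || (b && c)

lemma maj_key (a b c : Bool) :
    (if majority3 a b c ≠ a then (1:ℕ) else 0) + (if majority3 a b c ≠ b then 1 else 0)
      + (if majority3 a b c ≠ c then 1 else 0) ≤ 1 := by revert a b c; decide

/-- Let T be a multiple of 3 and x₀, x₁, x₂ binary strings of length T,
and w their pointwise majority. Then there exist j ∈ {0,1,2} and R with
2T/3 ≤ R ≤ T such that the Hamming distance between the length-R prefixes of w and of
x_j equals R − 2T/3. -/
theorem majority_prefix_distance_crossing (T : ℕ) (hT : 3 ∣ T)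
    (x₀ x₁ x₂ : Fin T → Bool) :
    ∃ (j : Fin 3) (R : ℕ), 2 * (T / 3) ≤ R ∧ R ≤ T ∧
      (Finset.univ.filter fun i : Fin T =>
        i.val < R ∧ majority3 (x₀ i) (x₁ i) (x₂ i) ≠ ![x₀, x₁, x₂] j i).card
        = R - 2 * (T / 3) := by
  obtain ⟨t, ht⟩ := hT
  have htT : T / 3 = t := by omega
  set d : Fin 3 → ℕ → ℕ := fun j R =>
    (Finset.univ.filter fun i : Fin T =>
      i.val < R ∧ majority3 (x₀ i) (x₁ i) (x₂ i) ≠ ![x₀, x₁, x₂] j i).card with hd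
  have hmono : ∀ j, Monotone (d j) := by
    intro j a b hab
    apply Finset.card_le_card
    intro i hi
    simp only [Finset.mem_filter] at hi ⊢
    exact ⟨hi.1, lt_of_lt_of_le hi.2.1 hab, hi.2.2⟩
  -- each d j R as a sum of indicators
  have hdsum : ∀ j R, d j R = ∑ i : Fin T,
      if i.val < R ∧ majority3 (x₀ i) (x₁ i) (x₂ i) ≠ ![x₀, x₁, x₂] j i then 1 else 0 := by
    intro j R
    show (Finset.univ.filter fun i : Fin T =>
      i.val < R ∧ majority3 (x₀ i) (x₁ i) (x₂ i) ≠ ![x₀, x₁, x₂] j i).card = _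
    rw [Finset.card_filter]
  have hsum : d 0 T + d 1 T + d 2 T ≤ T := by
    rw [hdsum, hdsum, hdsum, ← Finset.sum_add_distrib, ← Finset.sum_add_distrib]
    calc (∑ i : Fin T, ((if i.val < T ∧ majority3 (x₀ i) (x₁ i) (x₂ i) ≠ ![x₀, x₁, x₂] 0 i then 1 else 0)
          + (if i.val < T ∧ majority3 (x₀ i) (x₁ i) (x₂ i) ≠ ![x₀, x₁, x₂] 1 i then 1 else 0)
          + (if i.val < T ∧ majority3 (x₀ i) (x₁ i) (x₂ i) ≠ ![x₀, x₁, x₂] 2 i then 1 else 0)))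
        ≤ ∑ i : Fin T, 1 := by
          apply Finset.sum_le_sum
          intro i _
          have hi : i.val < T := i.isLt
          simp only [hi, true_and, Matrix.cons_val_zero, Matrix.cons_val_one, Matrix.head_cons]
          have := maj_key (x₀ i) (x₁ i) (x₂ i)
          convert this using 3 <;> rfl
      _ = T := by simp
  -- find j with d j T ≤ t
  have hj : ∃ j : Fin 3, d j T ≤ t := by
    by_contra h
    push_neg at h
    have h0 := h 0; have h1 := h 1; have h2 := h 2
    omega
  obtain ⟨j, hjT⟩ := hj
  -- minimal R with d j R + 2*t ≤ R
  have hPT : d j T + 2 * t ≤ T := by omega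
  have hex : ∃ R, d j R + 2 * t ≤ R := ⟨T, hPT⟩
  classical
  set R := Nat.find hex with hR
  have hspec : d j R + 2 * t ≤ R := Nat.find_spec hex
  have hRT : R ≤ T := Nat.find_le hPT
  have heq : d j R + 2 * t = R := by
    rcases Nat.eq_zero_or_pos R with h0 | hpos
    · omega
    · have hmin : ¬ (d j (R - 1) + 2 * t ≤ R - 1) := Nat.find_min hex (by omega)
      have := hmono j (Nat.sub_le R 1)
      omega
  refine ⟨j, R, ?_, hRT, ?_⟩
  · omega
  · show d j R = R - 2 * (T / 3)
    omega
end

section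
/- There exists a binary code of block length 10 with 6 codewords and minimum distance 6: a set S ⊆ (Fin 10 → Bool) with |S| = 6 such that any two distinct elements of S have Hamming distance at least 6 (relative distance 6/10). -/
set_option maxRecDepth 10000

def mkw (l : List Bool) : Fin 10 → Bool := fun i => l.getD i.val false

def c0 : Fin 10 → Bool := mkw [false,false,false,false,false,false,false,false,false,false]
def c1 : Fin 10 → Bool := mkw [true,true,false,false,true,false,true,false,true,true]
def c2 : Fin 10 → Bool := mkw [true,false,true,false,true,true,true,true,false,false]
def c3 : Fin 10 → Bool := mkw [false,true,true,true,false,true,true,false,false,true]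
def c4 : Fin 10 → Bool := mkw [false,false,true,true,true,false,false,true,true,true]
def c5 : Fin 10 → Bool := mkw [true,true,false,true,false,true,false,true,true,false]

/-- There exists a binary code of block length 10 with 6 codewords and
minimum distance 6: a set S ⊆ (Fin 10 → Bool) with |S| = 6 such that any two distinct
elements of S have Hamming distance at least 6. -/
theorem code_length10_six_words_distance6 :
    ∃ S : Finset (Fin 10 → Bool), S.card = 6 ∧
      ∀ u ∈ S, ∀ v ∈ S, u ≠ v → 6 ≤ hammingDist u v := by
  refine ⟨{c0,c1,c2,c3,c4,c5}, by decide, ?_⟩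
  intro u hu v hv huv
  fin_cases hu <;> fin_cases hv <;> revert huv <;> decide
end

section
/- Let ε ∈ (0, 1/3) and n, N ∈ ℕ with N ≥ 1. Let m₁, …, m_N and e₁, …, e_N be nonnegative reals, and let {1,…,N} be partitioned into three disjoint sets C, U, W. Assume: (i) e_i ≥ (m_i − 2 − 1/ε)/2 for every i ∈ C; (ii) e_i ≥ m_i/3 for every i ∈ U; (iii) e_i ≥ (m_i + 1/ε)/2 for every i ∈ W; (iv) m_i ≥ 2 + 1/ε for every i ∈ C ∪ W; (v) m₁ + ⋯ + m_N = n/ε²; and (vi) |C| − 2|W| < n. Then (e₁ + ⋯ + e_N)/(m₁ + ⋯ + m_N) ≥ 1/3 − (4/3)·ε. -/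
open Finset

/-- the core counting inequality in the analysis of the binary feedback
protocol tolerating noise rate 1/3 − ε. -/
theorem noise_rate_lower_bound (ε : ℝ) (hε0 : 0 < ε) (hε : ε < 1/3)
    (n N : ℕ) (hN : 1 ≤ N) (m e : Fin N → ℝ)
    (hm : ∀ i, 0 ≤ m i) (he : ∀ i, 0 ≤ e i)
    (C U W : Finset (Fin N))
    (hCU : Disjoint C U) (hCW : Disjoint C W) (hUW : Disjoint U W)
    (hcover : C ∪ U ∪ W = Finset.univ)
    (h1 : ∀ i ∈ C, (m i - 2 - 1/ε) / 2 ≤ e i)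
    (h2 : ∀ i ∈ U, m i / 3 ≤ e i)
    (h3 : ∀ i ∈ W, (m i + 1/ε) / 2 ≤ e i)
    (h4 : ∀ i ∈ C ∪ W, 2 + 1/ε ≤ m i)
    (h5 : ∑ i, m i = (n : ℝ) / ε ^ 2)
    (h6 : (C.card : ℝ) - 2 * (W.card : ℝ) < n) :
    1/3 - 4/3 * ε ≤ (∑ i, e i) / (∑ i, m i) := by
  have hεne : ε ≠ 0 := ne_of_gt hε0
  have ht0 : 0 < 1/ε := by positivity
  have hdisj : Disjoint (C ∪ U) W := Finset.disjoint_union_left.mpr ⟨hCW, hUW⟩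
  have hEsum : ∑ i, e i = ∑ i ∈ C, e i + ∑ i ∈ U, e i + ∑ i ∈ W, e i := by
    rw [← hcover, Finset.sum_union hdisj, Finset.sum_union hCU]
  have hMsum : ∑ i, m i = ∑ i ∈ C, m i + ∑ i ∈ U, m i + ∑ i ∈ W, m i := by
    rw [← hcover, Finset.sum_union hdisj, Finset.sum_union hCU]
  have hCm0 : 0 ≤ ∑ i ∈ C, m i := Finset.sum_nonneg fun i _ => hm i
  have hUm0 : 0 ≤ ∑ i ∈ U, m i := Finset.sum_nonneg fun i _ => hm i
  have hWm : (2 + 1/ε) * (W.card : ℝ) ≤ ∑ i ∈ W, m i := by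
    calc (2 + 1/ε) * (W.card : ℝ) = ∑ _i ∈ W, (2 + 1/ε) := by
          rw [Finset.sum_const, nsmul_eq_mul]; ring
      _ ≤ ∑ i ∈ W, m i :=
          Finset.sum_le_sum fun i hi => h4 i (Finset.mem_union_right _ hi)
  -- rule out n = 0
  rcases Nat.eq_zero_or_pos n with hn | hn
  · exfalso
    have hMz : ∑ i, m i = 0 := by rw [h5, hn]; simp
    have hWne : W.Nonempty := by
      rcases W.eq_empty_or_nonempty with h | h
      · exfalso
        rw [h, hn] at h6
        simp at h6
        have : (0:ℝ) ≤ (C.card : ℝ) := Nat.cast_nonneg _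
        linarith
      · exact h
    obtain ⟨i, hi⟩ := hWne
    have h4i := h4 i (Finset.mem_union_right _ hi)
    have hsum : m i ≤ ∑ j, m j :=
      Finset.single_le_sum (fun j _ => hm j) (Finset.mem_univ i)
    rw [hMz] at hsum
    linarith
  -- main case
  have hnpos : (0:ℝ) < (n:ℝ) := by exact_mod_cast hn
  have hMpos : 0 < ∑ i, m i := by rw [h5]; positivity
  rw [le_div_iff₀ hMpos]
  set M := ∑ i, m i with hM
  set cC := (C.card : ℝ)
  set cW := (W.card : ℝ)
  -- lower bounds on the three partial sums of e
  have hC : (∑ i ∈ C, m i) / 3 - (2/3 + 1/(3*ε)) * cC ≤ ∑ i ∈ C, e i := by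
    have hstep : ∑ i ∈ C, (m i / 3 - (2/3 + 1/(3*ε))) ≤ ∑ i ∈ C, e i := by
      refine Finset.sum_le_sum fun i hi => ?_
      have h4i := h4 i (Finset.mem_union_left _ hi)
      have h1i := h1 i hi
      have h3ε : 1/(3*ε) = (1/ε)/3 := by ring
      rw [h3ε]
      linarith
    have hid : ∑ i ∈ C, (m i / 3 - (2/3 + 1/(3*ε)))
        = (∑ i ∈ C, m i) / 3 - (2/3 + 1/(3*ε)) * cC := by
      rw [Finset.sum_sub_distrib, ← Finset.sum_div, Finset.sum_const, nsmul_eq_mul]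
      ring
    linarith [hid ▸ hstep]
  have hU : (∑ i ∈ U, m i) / 3 ≤ ∑ i ∈ U, e i := by
    rw [Finset.sum_div]
    exact Finset.sum_le_sum h2
  have hW : (∑ i ∈ W, m i) / 3 + (1/3 + 2/(3*ε)) * cW ≤ ∑ i ∈ W, e i := by
    have hstep : ∑ i ∈ W, (m i / 3 + (1/3 + 2/(3*ε))) ≤ ∑ i ∈ W, e i := by
      refine Finset.sum_le_sum fun i hi => ?_
      have h4i := h4 i (Finset.mem_union_right _ hi)
      have h3i := h3 i hi
      have h3ε : 2/(3*ε) = 2*(1/ε)/3 := by ring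
      rw [h3ε]
      linarith
    have hid : ∑ i ∈ W, (m i / 3 + (1/3 + 2/(3*ε)))
        = (∑ i ∈ W, m i) / 3 + (1/3 + 2/(3*ε)) * cW := by
      rw [Finset.sum_add_distrib, ← Finset.sum_div, Finset.sum_const, nsmul_eq_mul]
      ring
    linarith [hid ▸ hstep]
  have hElb : M/3 - (2/3 + 1/(3*ε)) * cC + (1/3 + 2/(3*ε)) * cW ≤ ∑ i, e i := by
    rw [hEsum, hMsum]
    linarith
  have ha : (0:ℝ) ≤ 2/3 + 1/(3*ε) := by positivity
  have s1 : (2/3 + 1/(3*ε)) * (cC - 2*cW) ≤ (2/3 + 1/(3*ε)) * (n:ℝ) :=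
    mul_le_mul_of_nonneg_left h6.le ha
  have hid2 : (2/3 + 1/(3*ε)) * (n:ℝ) = (2/3*ε^2 + ε/3) * M := by
    rw [h5]; field_simp
  have h2e : (0:ℝ) < 2*ε + 1 := by linarith
  have hWM : (2 + 1/ε) * cW ≤ M := by
    linarith [hWm, hMsum, hCm0, hUm0]
  have s2 : (2*ε + 1) * cW ≤ ε * M := by
    have := mul_le_mul_of_nonneg_left hWM hε0.le
    calc (2*ε + 1) * cW = ε * ((2 + 1/ε) * cW) := by field_simp
      _ ≤ ε * M := this
  have s3 : cW ≤ ε*M/(2*ε+1) := by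
    rw [le_div_iff₀ h2e]; linarith
  have s4 : ε*M/(2*ε+1) ≤ (ε - 2/3*ε^2) * M := by
    rw [div_le_iff₀ h2e]
    have h1e : (0:ℝ) ≤ 1 - ε := by linarith
    nlinarith [mul_nonneg (mul_nonneg (sq_nonneg ε) hMpos.le) h1e]
  clear_value M cC cW
  have s5 : cW ≤ (ε - 2/3*ε^2) * M := le_trans s3 s4
  ring_nf at hElb s1 hid2 s5 ⊢
  linarith [hElb, s1, hid2, s5]
end
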